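/- A real sequence (p_n) is statistically convergent to ℓ if and only if there exists a set J = {α_1 < α_2 < ...} ⊆ ℕ with natural density δ(J) = 1 such that the subsequence (p_{α_j}) converges to ℓ in the usual sense. -/

import Mathlib

open Filter

open scoped Classical in
/-- The sequence of partial densities of `P ⊆ ℕ`. -/
noncomputable def densSeq (P : Set ℕ) (n : ℕ) : ℝ :=
  (((Finset.range n).filter (fun k => k ∈ P)).card : ℝ) / n

/-- `P` has natural density `d`. -/
def HasDensity (P : Set ℕ) (d : ℝ) : Prop :=
  Tendsto (densSeq P) atTop (nhds d)

/-- Statistical convergence of a real sequence to `l`. -/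
def StatTendsto (x : ℕ → ℝ) (l : ℝ) : Prop :=
  ∀ ε : ℝ, 0 < ε → HasDensity {n | |x n - l| > ε} 0

open scoped Classical

lemma densSeq_eq (P : Set ℕ) [DecidablePred (· ∈ P)] (n : ℕ) :
    densSeq P n = (((Finset.range n).filter (fun k => k ∈ P)).card : ℝ) / n := by
  show _ / _ = _ / _
  congr!

lemma densSeq_nonneg (P : Set ℕ) (n : ℕ) : 0 ≤ densSeq P n := by
  unfold densSeq; positivity

lemma densSeq_le_of_subset_on_range {S T : Set ℕ} {n : ℕ}
    (h : ∀ m < n, m ∈ S → m ∈ T) : densSeq S n ≤ densSeq T n := by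
  classical
  simp only [densSeq_eq]
  rcases Nat.eq_zero_or_pos n with rfl | hn
  · simp
  · rw [div_le_div_iff_of_pos_right (by positivity : (0:ℝ) < n)]
    exact_mod_cast Finset.card_le_card (fun m hm => by
      simp only [Finset.mem_filter, Finset.mem_range] at *
      exact ⟨hm.1, h m hm.1 hm.2⟩)

lemma densSeq_union_le (P Q : Set ℕ) (n : ℕ) :
    densSeq (P ∪ Q) n ≤ densSeq P n + densSeq Q n := by
  classical
  simp only [densSeq_eq]
  rw [← add_div]
  rcases Nat.eq_zero_or_pos n with rfl | hn
  · simp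
  · rw [div_le_div_iff_of_pos_right (by positivity : (0:ℝ) < n)]
    have : (Finset.range n).filter (fun k => k ∈ P ∪ Q) ⊆
        ((Finset.range n).filter (fun k => k ∈ P)) ∪ ((Finset.range n).filter (fun k => k ∈ Q)) := by
      intro m hm
      simp only [Finset.mem_filter, Finset.mem_union, Set.mem_union] at *
      tauto
    exact_mod_cast (Finset.card_le_card this).trans (Finset.card_union_le _ _)

lemma densSeq_compl (P : Set ℕ) {n : ℕ} (hn : 1 ≤ n) :
    densSeq Pᶜ n = 1 - densSeq P n := by
  classical
  simp only [densSeq_eq]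
  have h : ((Finset.range n).filter (fun k => k ∈ P)).card
      + ((Finset.range n).filter (fun k => k ∈ Pᶜ)).card = n := by
    have := Finset.card_filter_add_card_filter_not
      (s := Finset.range n) (p := fun k => k ∈ P)
    simpa [Set.mem_compl_iff, Finset.card_range] using this
  have hn' : (n : ℝ) ≠ 0 := Nat.cast_ne_zero.2 (by omega)
  rw [eq_sub_iff_add_eq, ← add_div, div_eq_one_iff_eq hn']
  norm_cast
  omega

lemma hasDensity_compl {P : Set ℕ} {d : ℝ} (h : HasDensity P d) :
    HasDensity Pᶜ (1 - d) := by
  have : ∀ᶠ n in atTop, 1 - densSeq P n = densSeq Pᶜ n := by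
    filter_upwards [eventually_ge_atTop 1] with n hn
    exact (densSeq_compl P hn).symm
  exact Tendsto.congr' this (tendsto_const_nhds.sub h)

lemma tendsto_const_div : ∀ (c : ℝ), Tendsto (fun n : ℕ => c / n) atTop (nhds 0) :=
  fun c => Tendsto.div_atTop tendsto_const_nhds tendsto_natCast_atTop_atTop

lemma densSeq_lt_le (N n : ℕ) : densSeq {m | m < N} n ≤ (N : ℝ) / n := by
  classical
  simp only [densSeq_eq]
  rcases Nat.eq_zero_or_pos n with rfl | hn
  · simp
  · rw [div_le_div_iff_of_pos_right (by positivity : (0:ℝ) < n)]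
    have : (Finset.range n).filter (fun k => k ∈ {m | m < N}) ⊆ Finset.range N := by
      intro m hm
      simp only [Finset.mem_filter, Finset.mem_range, Set.mem_setOf_eq] at *
      exact hm.2
    simpa using (Nat.cast_le (α := ℝ)).2 (Finset.card_le_card this)

lemma hasDensity_zero_of_subset {S T : Set ℕ} (N : ℕ) (hT : HasDensity T 0)
    (h : ∀ n, n ∈ S → n ∈ T ∨ n < N) : HasDensity S 0 := by
  apply squeeze_zero (densSeq_nonneg S) (g := fun n => densSeq T n + (N : ℝ) / n)
  · intro n
    calc densSeq S n ≤ densSeq (T ∪ {m | m < N}) n :=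
          densSeq_le_of_subset_on_range (fun m _ hm => h m hm)
      _ ≤ densSeq T n + densSeq {m | m < N} n := densSeq_union_le _ _ _
      _ ≤ densSeq T n + (N : ℝ) / n := by linarith [densSeq_lt_le N n]
  · simpa using hT.add (tendsto_const_div N)

lemma hasDensity_empty : HasDensity (∅ : Set ℕ) 0 := by
  have : ∀ n, densSeq (∅ : Set ℕ) n = 0 := by intro n; unfold densSeq; simp
  simpa [HasDensity, funext this] using tendsto_const_nhds

lemma infinite_of_hasDensity_one {S : Set ℕ} (h : HasDensity S 1) : S.Infinite := by
  by_contra hinf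
  rw [Set.not_infinite] at hinf
  have hfin := hinf
  obtain ⟨N, hN⟩ := hfin.bddAbove
  have h0 : HasDensity S 0 := by
    apply hasDensity_zero_of_subset (N + 1) hasDensity_empty
    intro n hn
    exact Or.inr (Nat.lt_succ_of_le (hN hn))
  exact one_ne_zero (tendsto_nhds_unique h h0)

theorem statTendsto_iff_dense_subsequence (p : ℕ → ℝ) (l : ℝ) :
    StatTendsto p l ↔
      ∃ α : ℕ → ℕ, StrictMono α ∧ HasDensity (Set.range α) 1 ∧
        Tendsto (fun j => p (α j)) atTop (nhds l) := by
  constructor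
  · intro h
    set A : ℕ → Set ℕ := fun k => {n | |p n - l| > 1/(k+1)} with hA
    have hAd : ∀ k, HasDensity (A k) 0 := fun k => h _ (by positivity)
    have hM : ∀ k : ℕ, ∃ M : ℕ, ∀ n ≥ M, densSeq (A k) n < 1/(k+1) := by
      intro k
      exact eventually_atTop.1
        ((hAd k).eventually_lt_const (show (0:ℝ) < 1/(k+1) by positivity))
    choose M hMspec using hM
    obtain ⟨N, hN0, hNs⟩ : ∃ N : ℕ → ℕ, N 0 = M 0 ∧
        ∀ k, N (k+1) = max (M (k+1)) (N k + 1) :=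
      ⟨fun k => Nat.rec (M 0) (fun k ih => max (M (k+1)) (ih+1)) k, rfl, fun k => rfl⟩
    have hNmono : StrictMono N := strictMono_nat_of_lt_succ (fun k => by rw [hNs]; omega)
    have hNM : ∀ k, M k ≤ N k := by
      intro k
      cases k with
      | zero => exact hN0.ge
      | succ k => rw [hNs]; omega
    classical
    let c : ℕ → ℕ := fun n => @Nat.findGreatest (fun k => N k ≤ n) (fun k => Nat.decLe _ _) n
    have hkN : ∀ k, k ≤ N k := fun k => hNmono.le_apply
    have hc_ge : ∀ k n, N k ≤ n → k ≤ c n := by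
      intro k n hkn
      exact Nat.le_findGreatest (P := fun j => N j ≤ n) ((hkN k).trans hkn) hkn
    have hc_spec : ∀ n, N 0 ≤ n → N (c n) ≤ n := by
      intro n h0
      exact Nat.findGreatest_spec (P := fun j => N j ≤ n) (Nat.zero_le n) h0
    set B : Set ℕ := {n | N 0 ≤ n ∧ 1/((c n : ℝ)+1) < |p n - l|} with hB
    have key : ∀ k n, N k ≤ n → densSeq B n < 1/(k+1) := by
      intro k n hkn
      have hk' : k ≤ c n := hc_ge k n hkn
      have h0n : N 0 ≤ n := le_trans (hNmono.monotone (Nat.zero_le k)) hkn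
      have hsub : ∀ m < n, m ∈ B → m ∈ A (c n) := by
        intro m hmn hmB
        obtain ⟨hm0, hmp⟩ := hmB
        have hcm : c m ≤ c n := hc_ge (c m) n (le_trans (hc_spec m hm0) hmn.le)
        have hle : 1/((c n : ℝ)+1) ≤ 1/((c m : ℝ)+1) :=
          one_div_le_one_div_of_le (by positivity)
            (by exact_mod_cast Nat.add_le_add_right hcm 1)
        simp only [hA, Set.mem_setOf_eq]
        exact lt_of_le_of_lt hle hmp
      calc densSeq B n ≤ densSeq (A (c n)) n := densSeq_le_of_subset_on_range hsub
        _ < 1/((c n : ℝ)+1) := hMspec (c n) n ((hNM _).trans (hc_spec n h0n))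
        _ ≤ 1/((k : ℝ)+1) := one_div_le_one_div_of_le (by positivity)
            (by exact_mod_cast Nat.add_le_add_right hk' 1)
    have hBd : HasDensity B 0 := by
      rw [HasDensity, Metric.tendsto_atTop]
      intro ε hε
      obtain ⟨k, hk⟩ := exists_nat_one_div_lt hε
      exact ⟨N k, fun n hn => by
        rw [Real.dist_eq, sub_zero, abs_of_nonneg (densSeq_nonneg B n)]
        exact lt_trans (key k n hn) hk⟩
    have hBc : HasDensity Bᶜ 1 := by simpa using hasDensity_compl hBd
    have hinf : (Bᶜ : Set ℕ).Infinite := infinite_of_hasDensity_one hBc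
    have hinf' : {n | n ∈ Bᶜ}.Infinite := hinf
    refine ⟨Nat.nth (fun n => n ∈ Bᶜ), Nat.nth_strictMono hinf', ?_, ?_⟩
    · rw [Nat.range_nth_of_infinite hinf']
      exact hBc
    · rw [Metric.tendsto_atTop]
      intro ε hε
      obtain ⟨k, hk⟩ := exists_nat_one_div_lt hε
      refine ⟨N k, fun j hj => ?_⟩
      set m := Nat.nth (fun n => n ∈ Bᶜ) j with hm
      have hmem : m ∈ Bᶜ := Nat.nth_mem_of_infinite hinf' j
      have hjm : N k ≤ m := le_trans hj (Nat.nth_strictMono hinf').le_apply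
      have h0m : N 0 ≤ m := le_trans (hNmono.monotone (Nat.zero_le k)) hjm
      simp only [Set.mem_compl_iff, hB, Set.mem_setOf_eq, not_and, not_lt] at hmem
      have hle : |p m - l| ≤ 1/((c m : ℝ)+1) := hmem h0m
      have hck : k ≤ c m := hc_ge k m hjm
      rw [Real.dist_eq]
      calc |p m - l| ≤ 1/((c m : ℝ)+1) := hle
        _ ≤ 1/((k : ℝ)+1) := one_div_le_one_div_of_le (by positivity)
            (by exact_mod_cast Nat.add_le_add_right hck 1)
        _ < ε := hk
  · rintro ⟨α, hmono, hdens, hconv⟩ ε hε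
    have hc : HasDensity (Set.range α)ᶜ 0 := by simpa using hasDensity_compl hdens
    rw [Metric.tendsto_atTop] at hconv
    obtain ⟨J₀, hJ₀⟩ := hconv ε hε
    apply hasDensity_zero_of_subset (α J₀ + 1) hc
    intro n hn
    by_cases hr : n ∈ Set.range α
    · obtain ⟨j, rfl⟩ := hr
      right
      have hj : j < J₀ := by
        by_contra hj
        push_neg at hj
        have := hJ₀ j hj
        rw [Real.dist_eq] at this
        exact absurd hn (by simp only [Set.mem_setOf_eq, not_lt]; linarith)
      exact Nat.lt_succ_of_le (hmono.monotone hj.le)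
    · exact Or.inl hr
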